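/- arXiv:math/0701413 — 2 statements merged into one kernel-verified Lean document; each statement's English description precedes it below -/
import Mathlib

section
/- Let T > 0 and let ζ : [0,T] × ℝ → ℝ be a measurable function with 0 ≤ ζ ≤ 1. Suppose there exists a constant B > 0 such that for every continuously differentiable (in the space variable) continuous function H with compact support on [0,T] × ℝ, ∫₀ᵀ ∫_ℝ ∂_u H(s,u) ζ(s,u) du ds − 2 ∫₀ᵀ ∫_ℝ H(s,u)² du ds ≤ B. Then there exists a square integrable function g ∈ L²([0,T] × ℝ) such that ∫₀ᵀ ∫_ℝ H(s,u) g(s,u) du ds = − ∫₀ᵀ ∫_ℝ ∂_u H(s,u) ζ(s,u) du ds for every such H; that is, ζ admits a weak space derivative ∂_u ζ = g lying in L²([0,T] × ℝ). -/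
open MeasureTheory Real

/-- Test functions of class `C^{0,1}_0` on `[0,T] × ℝ`: continuous with compact support,
continuously differentiable in the second (space) variable. -/
def IsC01Test (H : ℝ → ℝ → ℝ) : Prop :=
  Continuous (Function.uncurry H) ∧ HasCompactSupport (Function.uncurry H) ∧
  (∀ s : ℝ, Differentiable ℝ (H s)) ∧
  Continuous (Function.uncurry fun s u => deriv (H s) u)

namespace Stmt7Aux

open Set Function

/-- The base measure on `(0,T] × ℝ`. -/
noncomputable def tμ (T : ℝ) : Measure (ℝ × ℝ) :=
  ((volume : Measure ℝ).restrict (Set.Ioc 0 T)).prod volume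

lemma tμ_eq_restrict (T : ℝ) :
    tμ T = ((volume : Measure ℝ).prod volume).restrict (Set.Ioc 0 T ×ˢ Set.univ) := by
  rw [tμ, ← Measure.prod_restrict, Measure.restrict_univ]

instance (T : ℝ) : IsFiniteMeasureOnCompacts (tμ T) := by
  rw [tμ_eq_restrict]
  exact inferInstance

instance (T : ℝ) : SFinite (tμ T) := by rw [tμ]; infer_instance

lemma test_zero : IsC01Test (fun _ _ => (0 : ℝ)) := by
  refine ⟨continuous_const, ?_, fun s => differentiable_const 0, ?_⟩
  · exact HasCompactSupport.intro isCompact_empty (fun x _ => rfl)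
  · have h : (Function.uncurry fun (s u : ℝ) => deriv ((fun (_ _ : ℝ) => (0:ℝ)) s) u)
        = fun _ : ℝ × ℝ => (0:ℝ) := by
      funext p; simp [Function.uncurry]
    exact h ▸ continuous_const

lemma test_add {H₁ H₂ : ℝ → ℝ → ℝ} (h₁ : IsC01Test H₁) (h₂ : IsC01Test H₂) :
    IsC01Test (fun s u => H₁ s u + H₂ s u) := by
  obtain ⟨c1, s1, d1, dc1⟩ := h₁
  obtain ⟨c2, s2, d2, dc2⟩ := h₂
  refine ⟨c1.add c2, ?_, fun s => (d1 s).add (d2 s), ?_⟩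
  · exact (s1.add s2 : HasCompactSupport (Function.uncurry H₁ + Function.uncurry H₂))
  · have : (Function.uncurry fun s u => deriv (fun v => H₁ s v + H₂ s v) u)
        = fun p : ℝ × ℝ => deriv (H₁ p.1) p.2 + deriv (H₂ p.1) p.2 := by
      funext p
      exact deriv_add (d1 p.1 p.2) (d2 p.1 p.2)
    rw [this]
    exact dc1.add dc2

lemma test_smul {H : ℝ → ℝ → ℝ} (c : ℝ) (h : IsC01Test H) :
    IsC01Test (fun s u => c * H s u) := by
  obtain ⟨c1, s1, d1, dc1⟩ := h
  refine ⟨continuous_const.mul c1, ?_, fun s => (d1 s).const_mul c, ?_⟩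
  · have : (Function.uncurry fun s u => c * H s u)
        = (fun _ : ℝ × ℝ => c) • Function.uncurry H := rfl
    rw [this]
    exact s1.smul_left
  · have : (Function.uncurry fun s u => deriv (fun v => c * H s v) u)
        = fun p : ℝ × ℝ => c * deriv (H p.1) p.2 := by
      funext p
      exact deriv_const_mul c (d1 p.1 p.2)
    rw [this]
    exact continuous_const.mul dc1

lemma test_memLp {T : ℝ} {H : ℝ → ℝ → ℝ} (h : IsC01Test H) :
    MemLp (Function.uncurry H) 2 (tμ T) :=
  h.1.memLp_of_hasCompactSupport h.2.1

/-- the derivative function `(s,u) ↦ ∂_u H (s,u)` is continuous with compact support. -/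
lemma deriv_continuous {H : ℝ → ℝ → ℝ} (h : IsC01Test H) :
    Continuous (fun p : ℝ × ℝ => deriv (H p.1) p.2) := h.2.2.2

lemma deriv_hasCompactSupport {H : ℝ → ℝ → ℝ} (h : IsC01Test H) :
    HasCompactSupport (fun p : ℝ × ℝ => deriv (H p.1) p.2) := by
  obtain ⟨hc, hs, hd, hdc⟩ := h
  set K := tsupport (Function.uncurry H) with hK
  have hKc : IsCompact K := hs
  refine HasCompactSupport.intro ((hKc.image continuous_fst).prod (hKc.image continuous_snd))
    (fun p hp => ?_)
  simp only [Set.mem_prod, Set.mem_image, not_and_or] at hp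
  rcases hp with hp | hp
  · -- p.1 not in the projection: H p.1 is identically zero
    have hzero : (H p.1) = fun _ => 0 := by
      funext v
      have : (p.1, v) ∉ K := by
        intro hmem
        exact hp ⟨(p.1, v), hmem, rfl⟩
      have := image_eq_zero_of_notMem_tsupport this
      simpa [Function.uncurry] using this
    rw [hzero]
    simp
  · -- p.2 not in the projection: H s vanishes in a neighbourhood of p.2
    have hopen : IsOpen ((Prod.snd '' K)ᶜ) := (hKc.image continuous_snd).isClosed.isOpen_compl
    have hmem : p.2 ∈ (Prod.snd '' K)ᶜ := hp
    have hev : (H p.1) =ᶠ[nhds p.2] (fun _ => 0) := by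
      filter_upwards [hopen.mem_nhds hmem] with v hv
      have : (p.1, v) ∉ K := fun hmem' => hv ⟨(p.1, v), hmem', rfl⟩
      have := image_eq_zero_of_notMem_tsupport this
      simpa [Function.uncurry] using this
    calc deriv (H p.1) p.2 = deriv (fun _ => (0:ℝ)) p.2 := hev.deriv_eq
      _ = 0 := by simp

/-- The linear functional `H ↦ ∫ ∂_u H ζ dμ`. -/
noncomputable def Lf (T : ℝ) (ζ : ℝ → ℝ → ℝ) (H : ℝ → ℝ → ℝ) : ℝ :=
  ∫ p : ℝ × ℝ, deriv (H p.1) p.2 * ζ p.1 p.2 ∂(tμ T)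

lemma integrable_deriv_mul {T : ℝ} {ζ : ℝ → ℝ → ℝ}
    (hmeas : Measurable (Function.uncurry ζ))
    (h01 : ∀ s u : ℝ, 0 ≤ ζ s u ∧ ζ s u ≤ 1)
    {H : ℝ → ℝ → ℝ} (h : IsC01Test H) :
    Integrable (fun p : ℝ × ℝ => deriv (H p.1) p.2 * ζ p.1 p.2) (tμ T) := by
  have hi : Integrable (fun p : ℝ × ℝ => |deriv (H p.1) p.2|) (tμ T) :=
    ((deriv_continuous h).integrable_of_hasCompactSupport (deriv_hasCompactSupport h)).abs
  refine hi.mono' ?_ ?_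
  · exact ((deriv_continuous h).measurable.mul hmeas).aestronglyMeasurable
  · refine Filter.Eventually.of_forall (fun p => ?_)
    have h0 := (h01 p.1 p.2).1
    have h1 := (h01 p.1 p.2).2
    rw [Real.norm_eq_abs, abs_mul]
    calc |deriv (H p.1) p.2| * |ζ p.1 p.2| ≤ |deriv (H p.1) p.2| * 1 := by
          apply mul_le_mul_of_nonneg_left _ (abs_nonneg _)
          rw [abs_of_nonneg h0]; exact h1
      _ = |deriv (H p.1) p.2| := mul_one _

lemma iterated_eq {T : ℝ} (hT : 0 < T) (F : ℝ × ℝ → ℝ) (hF : Integrable F (tμ T)) :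
    (∫ s in (0:ℝ)..T, ∫ u : ℝ, F (s, u)) = ∫ p, F p ∂(tμ T) := by
  rw [intervalIntegral.integral_of_le hT.le]
  exact (MeasureTheory.integral_prod F hF).symm



section Part2

open Set Function

lemma Lf_welldef {T : ℝ} (hT : 0 < T) (ζ : ℝ → ℝ → ℝ) {H₁ H₂ : ℝ → ℝ → ℝ}
    (h₁ : IsC01Test H₁) (h₂ : IsC01Test H₂)
    (hae : Function.uncurry H₁ =ᵐ[tμ T] Function.uncurry H₂) :
    Lf T ζ H₁ = Lf T ζ H₂ := by
  -- first, equality everywhere on `(0,T) × ℝ`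
  have hsub : Set.Ioo (0:ℝ) T ×ˢ (Set.univ : Set ℝ) ⊆ Set.Ioc 0 T ×ˢ Set.univ :=
    Set.prod_mono Set.Ioo_subset_Ioc_self le_rfl
  have h0 : Set.EqOn (Function.uncurry H₁) (Function.uncurry H₂)
      (Set.Ioo (0:ℝ) T ×ˢ (Set.univ : Set ℝ)) := by
    intro p hp
    by_contra hne
    set U := (Set.Ioo (0:ℝ) T ×ˢ (Set.univ : Set ℝ)) ∩
      {q | Function.uncurry H₁ q ≠ Function.uncurry H₂ q} with hU
    have hUopen : IsOpen U := (isOpen_Ioo.prod isOpen_univ).inter (isOpen_ne_fun h₁.1 h₂.1)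
    have hUne : U.Nonempty := ⟨p, hp, hne⟩
    have hpos : 0 < ((volume : Measure ℝ).prod volume) U :=
      hUopen.measure_pos _ hUne
    have hzero : tμ T U = 0 := by
      refine measure_mono_null (fun q hq => hq.2) ?_
      exact hae
    rw [tμ_eq_restrict, Measure.restrict_apply hUopen.measurableSet,
      Set.inter_eq_self_of_subset_left (fun q hq => hsub hq.1)] at hzero
    exact hpos.ne' hzero
  have hclos : Set.EqOn (Function.uncurry H₁) (Function.uncurry H₂)
      (Set.Icc (0:ℝ) T ×ˢ (Set.univ : Set ℝ)) := by
    have := h0.closure h₁.1 h₂.1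
    rwa [closure_prod_eq, closure_Ioo hT.ne, closure_univ] at this
  have hss : ∀ s ∈ Set.Ioc (0:ℝ) T, H₁ s = H₂ s := fun s hs => funext fun u =>
    hclos (Set.mk_mem_prod (Set.Ioc_subset_Icc_self hs) (Set.mem_univ u))
  rw [Lf, Lf, tμ_eq_restrict]
  refine setIntegral_congr_fun (measurableSet_Ioc.prod MeasurableSet.univ) (fun q hq => ?_)
  rw [hss q.1 hq.1]

lemma Lf_add {T : ℝ} {ζ : ℝ → ℝ → ℝ}
    (hmeas : Measurable (Function.uncurry ζ))
    (h01 : ∀ s u : ℝ, 0 ≤ ζ s u ∧ ζ s u ≤ 1)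
    {H₁ H₂ : ℝ → ℝ → ℝ} (h₁ : IsC01Test H₁) (h₂ : IsC01Test H₂) :
    Lf T ζ (fun s u => H₁ s u + H₂ s u) = Lf T ζ H₁ + Lf T ζ H₂ := by
  have key : (fun p : ℝ × ℝ => deriv ((fun s u => H₁ s u + H₂ s u) p.1) p.2 * ζ p.1 p.2)
      = fun p : ℝ × ℝ => deriv (H₁ p.1) p.2 * ζ p.1 p.2 + deriv (H₂ p.1) p.2 * ζ p.1 p.2 := by
    funext p
    rw [deriv_fun_add (h₁.2.2.1 p.1 p.2) (h₂.2.2.1 p.1 p.2), add_mul]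
  rw [Lf, key, integral_add (integrable_deriv_mul hmeas h01 h₁)
    (integrable_deriv_mul hmeas h01 h₂)]
  rfl

lemma Lf_smul {T : ℝ} {ζ : ℝ → ℝ → ℝ} (c : ℝ) {H : ℝ → ℝ → ℝ} (h : IsC01Test H) :
    Lf T ζ (fun s u => c * H s u) = c * Lf T ζ H := by
  have key : (fun p : ℝ × ℝ => deriv ((fun s u => c * H s u) p.1) p.2 * ζ p.1 p.2)
      = fun p : ℝ × ℝ => c * (deriv (H p.1) p.2 * ζ p.1 p.2) := by
    funext p
    rw [deriv_const_mul c (h.2.2.1 p.1 p.2), mul_assoc]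
  rw [Lf, key, integral_const_mul]
  rfl

lemma norm_sq_eq {T : ℝ} {H : ℝ → ℝ → ℝ} (h : IsC01Test H) :
    ‖(test_memLp (T := T) h).toLp (Function.uncurry H)‖^2
      = ∫ p, (H p.1 p.2)^2 ∂(tμ T) := by
  rw [← real_inner_self_eq_norm_sq, L2.inner_def]
  refine integral_congr_ae ?_
  filter_upwards [(test_memLp (T := T) h).coeFn_toLp] with p hp
  rw [hp]
  simp [RCLike.inner_apply, Function.uncurry, sq]

end Part2

end Stmt7Aux

open Stmt7Aux

/-- If `ζ : [0,T] × ℝ → [0,1]` is measurable and there is `B > 0` with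
`∫₀ᵀ∫_ℝ ∂_u H ζ − 2 ∫₀ᵀ∫_ℝ H² ≤ B` for every `C^{0,1}_0` test function `H`, then `ζ`
admits a weak space derivative `g` which is square integrable on `[0,T] × ℝ`:
`∫₀ᵀ∫_ℝ H g = − ∫₀ᵀ∫_ℝ ∂_u H ζ` for every such `H`. -/
theorem stmt_7
    (T : ℝ) (hT : 0 < T)
    (ζ : ℝ → ℝ → ℝ)
    (hmeas : Measurable (Function.uncurry ζ))
    (h01 : ∀ s u : ℝ, 0 ≤ ζ s u ∧ ζ s u ≤ 1)
    (B : ℝ) (hB : 0 < B)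
    (hEnergy : ∀ H : ℝ → ℝ → ℝ, IsC01Test H →
      (∫ s in (0 : ℝ)..T, ∫ u : ℝ, deriv (H s) u * ζ s u)
        - 2 * ∫ s in (0 : ℝ)..T, ∫ u : ℝ, (H s u) ^ 2 ≤ B) :
    ∃ g : ℝ → ℝ → ℝ,
      Measurable (Function.uncurry g) ∧
      IntegrableOn (fun p : ℝ × ℝ => (g p.1 p.2) ^ 2)
        (Set.Icc (0 : ℝ) T ×ˢ (Set.univ : Set ℝ)) ∧
      ∀ H : ℝ → ℝ → ℝ, IsC01Test H →
        ∫ s in (0 : ℝ)..T, ∫ u : ℝ, H s u * g s u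
          = - ∫ s in (0 : ℝ)..T, ∫ u : ℝ, deriv (H s) u * ζ s u := by
  classical
  -- notation
  set μ := tμ T with hμdef
  have hQnn : ∀ H : ℝ → ℝ → ℝ, IsC01Test H → 0 ≤ ∫ p : ℝ × ℝ, (H p.1 p.2)^2 ∂μ :=
    fun H _ => integral_nonneg (fun p => sq_nonneg _)
  -- Step 1: quadratic energy bound in product-measure form
  have hEn' : ∀ H : ℝ → ℝ → ℝ, IsC01Test H → ∀ l : ℝ,
      l * Lf T ζ H - 2 * (l^2 * ∫ p : ℝ × ℝ, (H p.1 p.2)^2 ∂μ) ≤ B := by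
    intro H hH l
    have hHl : IsC01Test (fun s u => l * H s u) := test_smul l hH
    have h1 := hEnergy _ hHl
    have e1 : (∫ s in (0:ℝ)..T, ∫ u : ℝ, deriv ((fun s u => l * H s u) s) u * ζ s u)
        = Lf T ζ (fun s u => l * H s u) :=
      iterated_eq hT _ (integrable_deriv_mul hmeas h01 hHl)
    have e2 : (∫ s in (0:ℝ)..T, ∫ u : ℝ, ((fun s u => l * H s u) s u)^2)
        = ∫ p : ℝ × ℝ, (l * H p.1 p.2)^2 ∂μ :=
      iterated_eq hT (fun p => (l * H p.1 p.2)^2) ((test_memLp hHl).integrable_sq)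
    have e3 : (∫ p : ℝ × ℝ, (l * H p.1 p.2)^2 ∂μ)
        = l^2 * ∫ p : ℝ × ℝ, (H p.1 p.2)^2 ∂μ := by
      simp_rw [mul_pow]
      exact integral_const_mul _ _
    rw [e1, e2, e3, Lf_smul l hH] at h1
    linarith
  -- Step 2: boundedness of the linear functional
  have hbound : ∀ H : ℝ → ℝ → ℝ, (hH : IsC01Test H) →
      |Lf T ζ H| ≤ Real.sqrt (8*B) * ‖(test_memLp (T := T) hH).toLp (Function.uncurry H)‖ := by
    intro H hH
    set a := Lf T ζ H with ha
    set q := ∫ p : ℝ × ℝ, (H p.1 p.2)^2 ∂μ with hq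
    have hsq : a^2 ≤ 8 * B * q := by
      rcases eq_or_lt_of_le (hQnn H hH) with h0 | hpos
      · have hq0 : q = 0 := hq.trans h0.symm
        have hlin : ∀ l : ℝ, l * a ≤ B := by
          intro l
          have h5 := hEn' H hH l
          rw [← ha, ← hq, hq0] at h5
          linarith
        have ha0 : a = 0 := by
          by_contra hne
          have h2 := hlin ((B+1)/a * a / a)
          have h3 := hlin ((B+1)/a)
          rw [div_mul_cancel₀ _ hne] at h3
          linarith
        rw [ha0, hq0]
        simp
      · have h2 := hEn' H hH (a / (4*q))
        rw [← hq, ← ha] at h2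
        have hqne : q ≠ 0 := ne_of_gt hpos
        have h3 : a^2 / (8*q) ≤ B := by
          have expand : a / (4*q) * a - 2 * ((a / (4*q))^2 * q) = a^2 / (8*q) := by
            field_simp
            ring
          linarith [expand ▸ h2]
        calc a^2 = a^2 / (8*q) * (8*q) := by field_simp
          _ ≤ B * (8*q) := by
              apply mul_le_mul_of_nonneg_right h3
              positivity
          _ = 8 * B * q := by ring
    have hnorm : ‖(test_memLp (T := T) hH).toLp (Function.uncurry H)‖ = Real.sqrt q := by
      rw [← Real.sqrt_sq (norm_nonneg _), norm_sq_eq hH]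
    calc |a| = Real.sqrt (a^2) := (Real.sqrt_sq_eq_abs a).symm
      _ ≤ Real.sqrt (8*B*q) := Real.sqrt_le_sqrt hsq
      _ = Real.sqrt (8*B) * Real.sqrt q := Real.sqrt_mul (by positivity) q
      _ = Real.sqrt (8*B) * ‖(test_memLp (T := T) hH).toLp (Function.uncurry H)‖ := by
          rw [hnorm]
  -- Step 3: the subspace of test functions in L²
  let V : Submodule ℝ (Lp ℝ 2 μ) :=
  { carrier := {f | ∃ H : ℝ → ℝ → ℝ, ∃ hH : IsC01Test H,
      f = (test_memLp (T := T) hH).toLp (Function.uncurry H)}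
    add_mem' := by
      rintro f g ⟨H₁, h₁, rfl⟩ ⟨H₂, h₂, rfl⟩
      refine ⟨_, test_add h₁ h₂, ?_⟩
      exact ((test_memLp (T := T) h₁).toLp_add (test_memLp h₂)).symm
    zero_mem' := ⟨_, test_zero, (MemLp.toLp_zero _).symm⟩
    smul_mem' := by
      rintro c f ⟨H, hH, rfl⟩
      refine ⟨_, test_smul c hH, ?_⟩
      exact ((test_memLp (T := T) hH).toLp_const_smul c).symm }
  have hLwd : ∀ (H₁ H₂ : ℝ → ℝ → ℝ) (h₁ : IsC01Test H₁) (h₂ : IsC01Test H₂),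
      (test_memLp (T := T) h₁).toLp (Function.uncurry H₁)
        = (test_memLp (T := T) h₂).toLp (Function.uncurry H₂) →
      Lf T ζ H₁ = Lf T ζ H₂ := by
    intro H₁ H₂ h₁ h₂ hEq
    exact Lf_welldef hT ζ h₁ h₂
      (((test_memLp h₁).toLp_eq_toLp_iff (test_memLp h₂)).mp hEq)
  -- the value of the functional on an Lp element
  let ℓval : Lp ℝ 2 μ → ℝ := fun f =>
    if h : ∃ H : ℝ → ℝ → ℝ, ∃ hH : IsC01Test H,
        f = (test_memLp (T := T) hH).toLp (Function.uncurry H)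
    then Lf T ζ h.choose else 0
  have hℓval : ∀ (H : ℝ → ℝ → ℝ) (hH : IsC01Test H),
      ℓval ((test_memLp (T := T) hH).toLp (Function.uncurry H)) = Lf T ζ H := by
    intro H hH
    have hex : ∃ H' : ℝ → ℝ → ℝ, ∃ hH' : IsC01Test H',
        (test_memLp (T := T) hH).toLp (Function.uncurry H)
          = (test_memLp (T := T) hH').toLp (Function.uncurry H') := ⟨H, hH, rfl⟩
    simp only [ℓval]
    rw [dif_pos hex]
    obtain ⟨h', heq⟩ := hex.choose_spec
    exact hLwd _ _ h' hH heq.symm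
  let ℓ : V →ₗ[ℝ] ℝ :=
  { toFun := fun x => ℓval x.1
    map_add' := by
      rintro ⟨f, hf⟩ ⟨g, hg⟩
      obtain ⟨H₁, h₁, rfl⟩ := hf
      obtain ⟨H₂, h₂, rfl⟩ := hg
      have eq1 : (test_memLp (T := T) (test_add h₁ h₂)).toLp
            (Function.uncurry (fun s u => H₁ s u + H₂ s u))
          = (test_memLp (T := T) h₁).toLp (Function.uncurry H₁)
            + (test_memLp (T := T) h₂).toLp (Function.uncurry H₂) :=
        (test_memLp (T := T) h₁).toLp_add (test_memLp h₂)
      show ℓval ((test_memLp (T := T) h₁).toLp (Function.uncurry H₁)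
          + (test_memLp (T := T) h₂).toLp (Function.uncurry H₂)) = _
      rw [← eq1, hℓval _ (test_add h₁ h₂), Lf_add hmeas h01 h₁ h₂]
      show _ = ℓval ((test_memLp (T := T) h₁).toLp (Function.uncurry H₁))
          + ℓval ((test_memLp (T := T) h₂).toLp (Function.uncurry H₂))
      rw [hℓval _ h₁, hℓval _ h₂]
    map_smul' := by
      rintro c ⟨f, hf⟩
      obtain ⟨H, hH, rfl⟩ := hf
      have eq1 : (test_memLp (T := T) (test_smul c hH)).toLp
            (Function.uncurry (fun s u => c * H s u))
          = c • (test_memLp (T := T) hH).toLp (Function.uncurry H) :=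
        (test_memLp (T := T) hH).toLp_const_smul c
      show ℓval (c • (test_memLp (T := T) hH).toLp (Function.uncurry H)) = _
      rw [← eq1, hℓval _ (test_smul c hH), Lf_smul c hH]
      show _ = c * ℓval ((test_memLp (T := T) hH).toLp (Function.uncurry H))
      rw [hℓval _ hH] }
  -- Step 4: Hahn-Banach extension
  have hℓbound : ∀ x : V, ℓ x ≤ Real.sqrt (8*B) * ‖(x : Lp ℝ 2 μ)‖ := by
    rintro ⟨f, hf⟩
    obtain ⟨H, hH, rfl⟩ := hf
    show ℓval _ ≤ _
    rw [hℓval _ hH]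
    exact le_trans (le_abs_self _) (hbound H hH)
  obtain ⟨glin, hgext, hgle⟩ := exists_extension_of_le_sublinear
    ⟨V, ℓ⟩ (fun x => Real.sqrt (8*B) * ‖x‖)
    (fun c hc x => by simp only [norm_smul, Real.norm_eq_abs, abs_of_pos hc]; ring)
    (fun x y => by
      calc Real.sqrt (8*B) * ‖x + y‖ ≤ Real.sqrt (8*B) * (‖x‖ + ‖y‖) :=
            mul_le_mul_of_nonneg_left (norm_add_le x y) (Real.sqrt_nonneg _)
        _ = Real.sqrt (8*B) * ‖x‖ + Real.sqrt (8*B) * ‖y‖ := by ring)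
    hℓbound
  have hgnorm : ∀ x : Lp ℝ 2 μ, ‖glin x‖ ≤ Real.sqrt (8*B) * ‖x‖ := by
    intro x
    rw [Real.norm_eq_abs, abs_le]
    constructor
    · have := hgle (-x)
      rw [map_neg, norm_neg] at this
      linarith
    · exact hgle x
  let G : Lp ℝ 2 μ →L[ℝ] ℝ := LinearMap.mkContinuous glin _ hgnorm
  -- Step 5: Riesz representation
  let φ := (InnerProductSpace.toDual ℝ (Lp ℝ 2 μ)).symm G
  have hφ : ∀ x : Lp ℝ 2 μ, inner (𝕜 := ℝ) φ x = G x := fun x =>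
    InnerProductSpace.toDual_symm_apply
  -- measurable representative
  have hφae : AEMeasurable (⇑φ : ℝ × ℝ → ℝ) μ := (Lp.aestronglyMeasurable φ).aemeasurable
  set ψ := hφae.mk _ with hψdef
  have hψmeas : Measurable ψ := hφae.measurable_mk
  have hψeq : (⇑φ : ℝ × ℝ → ℝ) =ᵐ[μ] ψ := hφae.ae_eq_mk
  refine ⟨fun s u => -ψ (s, u), hψmeas.neg, ?_, ?_⟩
  · -- square-integrability
    have hmem : MemLp ψ 2 μ := (Lp.memLp φ).ae_eq hψeq
    have hint : Integrable (fun p => ψ p ^ 2) μ := hmem.integrable_sq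
    have hμeq : (volume : Measure (ℝ × ℝ)).restrict (Set.Icc (0:ℝ) T ×ˢ Set.univ) = μ := by
      rw [hμdef, Measure.volume_eq_prod, ← Measure.prod_restrict, Measure.restrict_univ,
        ← Measure.restrict_congr_set MeasureTheory.Ioc_ae_eq_Icc, tμ]
    show Integrable _ ((volume : Measure (ℝ × ℝ)).restrict (Set.Icc (0:ℝ) T ×ˢ Set.univ))
    rw [hμeq]
    refine hint.congr (Filter.Eventually.of_forall (fun p => ?_))
    simp
  · -- the weak derivative identity
    intro H hH
    have hHmem := test_memLp (T := T) hH
    have hRHS : (∫ s in (0:ℝ)..T, ∫ u : ℝ, deriv (H s) u * ζ s u) = Lf T ζ H :=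
      iterated_eq hT _ (integrable_deriv_mul hmeas h01 hH)
    have hintHψ : Integrable (fun p : ℝ × ℝ => H p.1 p.2 * ψ p) μ := by
      have h2 := L2.integrable_inner (𝕜 := ℝ) (hHmem.toLp (Function.uncurry H)) φ
      refine h2.congr ?_
      filter_upwards [hHmem.coeFn_toLp, hψeq] with p hp hp2
      simp [RCLike.inner_apply, hp, hp2, Function.uncurry, mul_comm]
    have h3 : (∫ p : ℝ × ℝ, H p.1 p.2 * ψ p ∂μ) = Lf T ζ H := by
      have e4 : (∫ p : ℝ × ℝ, H p.1 p.2 * ψ p ∂μ)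
          = inner (𝕜 := ℝ) (hHmem.toLp (Function.uncurry H)) φ := by
        rw [L2.inner_def]
        refine integral_congr_ae ?_
        filter_upwards [hHmem.coeFn_toLp, hψeq] with p hp hp2
        simp [RCLike.inner_apply, hp, hp2, Function.uncurry, mul_comm]
      have hx : (hHmem.toLp (Function.uncurry H)) ∈ V := ⟨H, hH, rfl⟩
      have e5 := hgext ⟨_, hx⟩
      rw [e4, real_inner_comm, hφ]
      show glin _ = _
      rw [e5]
      exact hℓval _ hH
    have hLHS : (∫ s in (0:ℝ)..T, ∫ u : ℝ, H s u * -ψ (s, u))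
        = ∫ p : ℝ × ℝ, H p.1 p.2 * -ψ p ∂μ := by
      refine iterated_eq hT (fun p => H p.1 p.2 * -ψ p) ?_
      refine hintHψ.neg.congr (Filter.Eventually.of_forall (fun p => ?_))
      simp
    show (∫ s in (0:ℝ)..T, ∫ u : ℝ, H s u * -ψ (s, u))
        = - ∫ s in (0:ℝ)..T, ∫ u : ℝ, deriv (H s) u * ζ s u
    rw [hLHS, hRHS, ← h3]
    simp_rw [mul_neg]
    rw [integral_neg]
end

section
/- Let α ∈ (0,1) and let ν_α be the Bernoulli product measure with parameter α on Ω = {0,1}^ℤ. For z ∈ ℤ let τ_z : Ω → Ω be the map (τ_z ξ)(x) = ξ(x−1) if x > z, (τ_z ξ)(z) = 0, and (τ_z ξ)(x) = ξ(x) if x < z. Let (c_z)_{z ∈ ℤ} be nonnegative reals with Σ_{z∈ℤ} c_z < ∞, and let f : Ω → ℝ be a bounded measurable function. Then Σ_{z ∈ ℤ} c_z ∫_Ω [f(τ_z ξ) − f(ξ)] f(ξ) dν_α(ξ) ≤ (Σ_{z ∈ ℤ} c_z / (2(1−α))) · ∫_Ω f(ξ)² dν_α(ξ). -/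
open MeasureTheory ProbabilityTheory Real

namespace Stmt9Aux

noncomputable def bmeas (α : ℝ) : Bool → ENNReal :=
  fun b => if b then ENNReal.ofReal α else ENNReal.ofReal (1 - α)

def Cyl (F : Finset ℤ) (g : ℤ → Bool) : Set (ℤ → Bool) := {ξ | ∀ i ∈ F, ξ i = g i}

lemma cyl_eq (F : Finset ℤ) (g : ℤ → Bool) :
    Cyl F g = ⋂ i ∈ F, (fun ξ : ℤ → Bool => ξ i) ⁻¹' {g i} := by
  ext ξ; simp [Cyl]

lemma measurableSet_cyl (F : Finset ℤ) (g : ℤ → Bool) : MeasurableSet (Cyl F g) := by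
  rw [cyl_eq]
  exact MeasurableSet.biInter (F.countable_toSet) fun i _ =>
    (measurable_pi_apply i) (measurableSet_singleton _)

def cylSets : Set (Set (ℤ → Bool)) := {s | ∃ F g, s = Cyl F g}

lemma isPiSystem_cylSets : IsPiSystem cylSets := by
  rintro s ⟨F, g, rfl⟩ t ⟨F', g', rfl⟩ ⟨ξ₀, hξ₀⟩
  obtain ⟨h1, h2⟩ : (∀ i ∈ F, ξ₀ i = g i) ∧ (∀ i ∈ F', ξ₀ i = g' i) := hξ₀
  refine ⟨F ∪ F', fun i => if i ∈ F then g i else g' i, ?_⟩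
  ext ξ
  simp only [Cyl, Set.mem_inter_iff, Set.mem_setOf_eq, Finset.mem_union]
  constructor
  · rintro ⟨hF, hF'⟩ i hi
    by_cases h : i ∈ F
    · simp [h, hF i h]
    · simp [h, hF' i (hi.resolve_left h)]
  · intro H
    constructor
    · intro i hi; have := H i (Or.inl hi); simpa [hi] using this
    · intro i hi
      have := H i (Or.inr hi)
      by_cases h : i ∈ F
      · rw [if_pos h] at this
        rw [this, ← h1 i h, h2 i hi]
      · rwa [if_neg h] at this

lemma generateFrom_cylSets :
    (inferInstance : MeasurableSpace (ℤ → Bool)) = MeasurableSpace.generateFrom cylSets := by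
  refine le_antisymm ?_ (MeasurableSpace.generateFrom_le ?_)
  · refine iSup_le fun i => ?_
    intro s hs
    obtain ⟨t, -, rfl⟩ := hs
    have : (fun ξ : ℤ → Bool => ξ i) ⁻¹' t = ⋃ b ∈ t, Cyl {i} (fun _ => b) := by
      ext ξ; simp [Cyl]
    rw [this]
    exact MeasurableSet.biUnion t.to_countable fun b _ =>
      MeasurableSpace.measurableSet_generateFrom ⟨_, _, rfl⟩
  · rintro s ⟨F, g, rfl⟩; exact measurableSet_cyl F g

variable {α : ℝ} {ν : Measure (ℤ → Bool)} [IsProbabilityMeasure ν]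

lemma meas_eval (hα : α ∈ Set.Ioo (0:ℝ) 1)
    (hBern : ∀ x : ℤ, ν {ξ | ξ x = true} = ENNReal.ofReal α) (i : ℤ) (b : Bool) :
    ν ((fun ξ : ℤ → Bool => ξ i) ⁻¹' {b}) = bmeas α b := by
  have hkey : (fun ξ : ℤ → Bool => ξ i) ⁻¹' {true} = {ξ : ℤ → Bool | ξ i = true} := by
    ext ξ; simp
  cases b
  · have hset : (fun ξ : ℤ → Bool => ξ i) ⁻¹' {false} = {ξ : ℤ → Bool | ξ i = true}ᶜ := by
      ext ξ; simp
    rw [hset, measure_compl (hkey ▸ (measurable_pi_apply i) (measurableSet_singleton true))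
      (measure_ne_top ν _), hBern, measure_univ]
    simp only [bmeas, Bool.false_eq_true, if_false]
    rw [ENNReal.ofReal_sub _ hα.1.le, ENNReal.ofReal_one]
  · rw [hkey]; simpa [bmeas] using hBern i

lemma meas_cyl (hα : α ∈ Set.Ioo (0:ℝ) 1)
    (hBern : ∀ x : ℤ, ν {ξ | ξ x = true} = ENNReal.ofReal α)
    (hIndep : iIndepFun
      (fun (x : ℤ) (ξ : ℤ → Bool) => ξ x) ν)
    (F : Finset ℤ) (g : ℤ → Bool) :
    ν (Cyl F g) = ∏ i ∈ F, bmeas α (g i) := by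
  rw [cyl_eq]
  rw [hIndep.measure_inter_preimage_eq_mul F
    (sets := fun i => ({g i} : Set Bool)) (fun i _ => measurableSet_singleton (g i))]
  exact Finset.prod_congr rfl fun i _ => meas_eval hα hBern i (g i)



def σf (z i : ℤ) : ℤ := if z < i then i - 1 else i
def σg (z j : ℤ) : ℤ := if z ≤ j then j + 1 else j

lemma σgσf {z i : ℤ} (h : i ≠ z) : σg z (σf z i) = i := by
  simp only [σf, σg]; split_ifs <;> omega

lemma σf_injOn (z : ℤ) : ∀ i ≠ z, ∀ j ≠ z, σf z i = σf z j → i = j := by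
  intro i hi j hj
  simp only [σf]; split_ifs <;> omega

variable (τ : ℤ → (ℤ → Bool) → (ℤ → Bool))
variable (hτ : ∀ z : ℤ, ∀ ξ : ℤ → Bool, ∀ x : ℤ,
      τ z ξ x = if z < x then ξ (x - 1) else if x = z then false else ξ x)

include hτ

lemma tau_self (z : ℤ) (ξ : ℤ → Bool) : τ z ξ z = false := by
  rw [hτ]; simp

lemma tau_coord (z : ℤ) (ξ : ℤ → Bool) {i : ℤ} (h : i ≠ z) : τ z ξ i = ξ (σf z i) := by
  rw [hτ z ξ i]
  by_cases h1 : z < i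
  · simp [σf, h1]
  · simp [σf, h1, h]

lemma preimage_cyl (z : ℤ) (F : Finset ℤ) (g : ℤ → Bool) (hne : ¬ (z ∈ F ∧ g z = true)) :
    τ z ⁻¹' Cyl F g = Cyl ((F.erase z).image (σf z)) (fun j => g (σg z j)) := by
  ext ξ
  simp only [Set.mem_preimage, Cyl, Set.mem_setOf_eq, Finset.mem_image, Finset.mem_erase]
  constructor
  · rintro H j ⟨i, ⟨hiz, hiF⟩, rfl⟩
    rw [σgσf hiz, ← H i hiF, tau_coord τ hτ z ξ hiz]
  · intro H i hiF
    by_cases hiz : i = z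
    · subst hiz
      rw [tau_self τ hτ]
      rcases Bool.eq_false_or_eq_true (g i) with h | h
      · exact absurd ⟨hiF, h⟩ hne
      · exact h.symm
    · rw [tau_coord τ hτ z ξ hiz, H (σf z i) ⟨i, ⟨hiz, hiF⟩, rfl⟩, σgσf hiz]

lemma preimage_cyl_empty (z : ℤ) (F : Finset ℤ) (g : ℤ → Bool)
    (hzF : z ∈ F) (hgz : g z = true) :
    τ z ⁻¹' Cyl F g = ∅ := by
  ext ξ
  simp only [Set.mem_preimage, Cyl, Set.mem_setOf_eq, Set.mem_empty_iff_false, iff_false]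
  intro H
  have := H z hzF
  rw [tau_self τ hτ, hgz] at this
  exact Bool.false_ne_true this

omit hτ in
lemma inter_cyl (z : ℤ) (F : Finset ℤ) (g : ℤ → Bool) (hne : ¬ (z ∈ F ∧ g z = true)) :
    Cyl F g ∩ {ξ : ℤ → Bool | ξ z = false}
      = Cyl (insert z F) (Function.update g z false) := by
  ext ξ
  simp only [Cyl, Set.mem_inter_iff, Set.mem_setOf_eq, Finset.mem_insert]
  constructor
  · rintro ⟨H, hz⟩ i hi
    by_cases hiz : i = z
    · subst hiz; rw [Function.update_self]; exact hz
    · rw [Function.update_of_ne hiz]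
      exact H i (hi.resolve_left hiz)
  · intro H
    have hz : ξ z = false := by
      have := H z (Or.inl rfl); rwa [Function.update_self] at this
    refine ⟨fun i hi => ?_, hz⟩
    by_cases hiz : i = z
    · subst hiz
      rcases Bool.eq_false_or_eq_true (g i) with h | h
      · exact absurd ⟨hi, h⟩ hne
      · rw [hz, h]
    · have := H i (Or.inr hi); rwa [Function.update_of_ne hiz] at this

omit hτ in
lemma inter_cyl_empty (z : ℤ) (F : Finset ℤ) (g : ℤ → Bool)
    (hzF : z ∈ F) (hgz : g z = true) :
    Cyl F g ∩ {ξ : ℤ → Bool | ξ z = false} = ∅ := by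
  ext ξ
  simp only [Cyl, Set.mem_inter_iff, Set.mem_setOf_eq, Set.mem_empty_iff_false, iff_false,
    not_and]
  intro H
  rw [H z hzF, hgz]
  simp


lemma map_eq (hα : α ∈ Set.Ioo (0:ℝ) 1)
    (hBern : ∀ x : ℤ, ν {ξ | ξ x = true} = ENNReal.ofReal α)
    (hIndep : iIndepFun
      (fun (x : ℤ) (ξ : ℤ → Bool) => ξ x) ν)
    (z : ℤ) (hτm : Measurable (τ z)) :
    ν.map (τ z) = (ENNReal.ofReal (1 - α))⁻¹ • ν.restrict {ξ : ℤ → Bool | ξ z = false} := by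
  have h1α : (0:ℝ) < 1 - α := by linarith [hα.2]
  have h0 : ENNReal.ofReal (1 - α) ≠ 0 := (ENNReal.ofReal_pos.mpr h1α).ne'
  have htop : ENNReal.ofReal (1 - α) ≠ ⊤ := ENNReal.ofReal_ne_top
  have hSfalse : ν {ξ : ℤ → Bool | ξ z = false} = ENNReal.ofReal (1 - α) := by
    have : {ξ : ℤ → Bool | ξ z = false} = (fun ξ : ℤ → Bool => ξ z) ⁻¹' {false} := by
      ext ξ; simp
    rw [this, meas_eval hα hBern z false]
    simp [bmeas]
  haveI : IsProbabilityMeasure (ν.map (τ z)) := Measure.isProbabilityMeasure_map hτm.aemeasurable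
  refine ext_of_generate_finite cylSets generateFrom_cylSets isPiSystem_cylSets ?_ ?_
  · rintro s ⟨F, g, rfl⟩
    rw [Measure.map_apply hτm (measurableSet_cyl F g), Measure.smul_apply,
        Measure.restrict_apply (measurableSet_cyl F g), smul_eq_mul]
    by_cases hcase : z ∈ F ∧ g z = true
    · rw [preimage_cyl_empty τ hτ z F g hcase.1 hcase.2,
          inter_cyl_empty z F g hcase.1 hcase.2]
      simp
    · rw [preimage_cyl τ hτ z F g hcase, inter_cyl z F g hcase,
          meas_cyl hα hBern hIndep, meas_cyl hα hBern hIndep]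
      have hL : ∏ j ∈ (F.erase z).image (σf z), bmeas α (g (σg z j))
          = ∏ i ∈ F.erase z, bmeas α (g i) := by
        rw [Finset.prod_image (fun i hi j hj =>
          σf_injOn z i (Finset.mem_erase.mp hi).1 j (Finset.mem_erase.mp hj).1)]
        exact Finset.prod_congr rfl fun i hi => by
          rw [σgσf (Finset.mem_erase.mp hi).1]
      have hR : ∏ i ∈ insert z F, bmeas α (Function.update g z false i)
          = ENNReal.ofReal (1 - α) * ∏ i ∈ F.erase z, bmeas α (g i) := by
        have hins : insert z F = insert z (F.erase z) := by
          ext a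
          simp only [Finset.mem_insert, Finset.mem_erase]
          constructor
          · rintro (rfl | h)
            · exact Or.inl rfl
            · by_cases ha : a = z
              · exact Or.inl ha
              · exact Or.inr ⟨ha, h⟩
          · rintro (rfl | ⟨-, h⟩)
            · exact Or.inl rfl
            · exact Or.inr h
        rw [hins, Finset.prod_insert (Finset.notMem_erase z F), Function.update_self]
        have : bmeas α false = ENNReal.ofReal (1 - α) := by simp [bmeas]
        rw [this]
        congr 1
        exact Finset.prod_congr rfl fun i hi => by
          rw [Function.update_of_ne (Finset.mem_erase.mp hi).1]
      rw [hL, hR, ← mul_assoc, ENNReal.inv_mul_cancel h0 htop, one_mul]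
  · rw [Measure.map_apply hτm MeasurableSet.univ, Set.preimage_univ, Measure.smul_apply,
        Measure.restrict_apply MeasurableSet.univ, Set.univ_inter, hSfalse, smul_eq_mul,
        ENNReal.inv_mul_cancel h0 htop, measure_univ]

end Stmt9Aux

open Stmt9Aux in
/-- Estimate for the shift part of the generator under the Bernoulli
product measure.  With `ν` the Bernoulli product measure on `{0,1}^ℤ` with parameter
`α ∈ (0,1)`, `τ_z` the right shift inserting a `0` at `z`, `(c_z)` nonnegative summable
and `f` bounded measurable,
`∑_z c_z ∫ (f(τ_z ξ) − f(ξ)) f(ξ) dν ≤ (∑_z c_z) / (2(1−α)) · ∫ f(ξ)² dν`. -/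
theorem stmt_9
    (α : ℝ) (hα : α ∈ Set.Ioo (0 : ℝ) 1)
    (ν : Measure (ℤ → Bool)) [IsProbabilityMeasure ν]
    (hBern : ∀ x : ℤ, ν {ξ | ξ x = true} = ENNReal.ofReal α)
    (hIndep : iIndepFun
      (fun (x : ℤ) (ξ : ℤ → Bool) => ξ x) ν)
    (τ : ℤ → (ℤ → Bool) → (ℤ → Bool))
    (hτ : ∀ z : ℤ, ∀ ξ : ℤ → Bool, ∀ x : ℤ,
      τ z ξ x = if z < x then ξ (x - 1) else if x = z then false else ξ x)
    (c : ℤ → ℝ) (hc : ∀ z, 0 ≤ c z) (hcsum : Summable c)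
    (f : (ℤ → Bool) → ℝ)
    (hfmeas : Measurable f)
    (hfbdd : ∃ M : ℝ, ∀ ξ, |f ξ| ≤ M) :
    ∑' z : ℤ, c z * ∫ ξ, (f (τ z ξ) - f ξ) * f ξ ∂ν
      ≤ (∑' z : ℤ, c z) / (2 * (1 - α)) * ∫ ξ, (f ξ) ^ 2 ∂ν := by
  classical
  obtain ⟨M, hM⟩ := hfbdd
  have h1α : (0:ℝ) < 1 - α := by linarith [hα.2]
  have hM0 : 0 ≤ M := le_trans (abs_nonneg _) (hM (fun _ => false))
  -- measurability of τ z
  have hτmeas : ∀ z, Measurable (τ z) := by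
    intro z
    apply measurable_pi_lambda
    intro x
    have hx : (fun ξ : ℤ → Bool => τ z ξ x)
        = fun ξ : ℤ → Bool => if z < x then ξ (x - 1) else if x = z then false else ξ x :=
      funext fun ξ => hτ z ξ x
    rw [hx]
    split_ifs
    · exact measurable_pi_apply _
    · exact measurable_const
    · exact measurable_pi_apply _
  -- integrability facts
  have hif2 : Integrable (fun ξ => f ξ ^ 2) ν := by
    refine Integrable.mono' (integrable_const (M ^ 2))
      ((hfmeas.pow_const 2).aestronglyMeasurable) (ae_of_all _ fun ξ => ?_)
    rw [norm_pow]
    exact pow_le_pow_left₀ (norm_nonneg _) (hM ξ) 2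
  have habs : ∀ a b : ℝ, |a| ≤ M → |b| ≤ M → |(a - b) * b| ≤ 2 * M * M := by
    intro a b ha hb
    have h1 : |a - b| ≤ 2 * M := by
      calc |a - b| ≤ |a| + |b| := abs_sub a b
      _ ≤ M + M := add_le_add ha hb
      _ = 2 * M := by ring
    calc |(a - b) * b| = |a - b| * |b| := abs_mul _ _
    _ ≤ (2 * M) * M := mul_le_mul h1 hb (abs_nonneg _) (by positivity)
  have hint3 : ∀ z, Integrable (fun ξ => (f (τ z ξ) - f ξ) * f ξ) ν := by
    intro z
    refine Integrable.mono' (integrable_const (2 * M * M))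
      ((((hfmeas.comp (hτmeas z)).sub hfmeas).mul hfmeas).aestronglyMeasurable)
      (ae_of_all _ fun ξ => habs _ _ (hM _) (hM _))
  have hifτ2 : ∀ z, Integrable (fun ξ => f (τ z ξ) ^ 2) ν := by
    intro z
    refine Integrable.mono' (integrable_const (M ^ 2))
      (((hfmeas.comp (hτmeas z)).pow_const 2).aestronglyMeasurable)
      (ae_of_all _ fun ξ => ?_)
    rw [norm_pow]
    exact pow_le_pow_left₀ (norm_nonneg _) (hM _) 2
  -- key distributional estimate
  have hsq : ∀ z, ∫ ξ, f (τ z ξ) ^ 2 ∂ν ≤ (1 - α)⁻¹ * ∫ ξ, f ξ ^ 2 ∂ν := by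
    intro z
    have h1 : ∫ ξ, f (τ z ξ) ^ 2 ∂ν = ∫ ξ, f ξ ^ 2 ∂(ν.map (τ z)) :=
      (integral_map (hτmeas z).aemeasurable
        ((hfmeas.pow_const 2).aestronglyMeasurable)).symm
    rw [h1, map_eq τ hτ hα hBern hIndep z (hτmeas z), integral_smul_measure]
    have htr : ((ENNReal.ofReal (1 - α))⁻¹).toReal = (1 - α)⁻¹ := by
      rw [ENNReal.toReal_inv, ENNReal.toReal_ofReal h1α.le]
    rw [htr, smul_eq_mul]
    refine mul_le_mul_of_nonneg_left ?_ (inv_nonneg.mpr h1α.le)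
    exact setIntegral_le_integral hif2 (ae_of_all _ fun ξ => sq_nonneg _)
  -- per-z estimate
  have hz : ∀ z, ∫ ξ, (f (τ z ξ) - f ξ) * f ξ ∂ν
      ≤ 1 / (2 * (1 - α)) * ∫ ξ, f ξ ^ 2 ∂ν := by
    intro z
    have step1 : ∫ ξ, (f (τ z ξ) - f ξ) * f ξ ∂ν
        ≤ ∫ ξ, (1/2 : ℝ) * f (τ z ξ) ^ 2 ∂ν := by
      refine integral_mono (hint3 z) ((hifτ2 z).const_mul _) fun ξ => ?_
      nlinarith [sq_nonneg (f (τ z ξ) - f ξ), sq_nonneg (f ξ)]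
    rw [integral_const_mul] at step1
    calc ∫ ξ, (f (τ z ξ) - f ξ) * f ξ ∂ν
        ≤ 1/2 * ∫ ξ, f (τ z ξ) ^ 2 ∂ν := step1
      _ ≤ 1/2 * ((1 - α)⁻¹ * ∫ ξ, f ξ ^ 2 ∂ν) :=
          mul_le_mul_of_nonneg_left (hsq z) (by norm_num)
      _ = 1 / (2 * (1 - α)) * ∫ ξ, f ξ ^ 2 ∂ν := by
          field_simp
  set K : ℝ := 1 / (2 * (1 - α)) * ∫ ξ, f ξ ^ 2 ∂ν with hKdef
  have hIbd : ∀ z, |∫ ξ, (f (τ z ξ) - f ξ) * f ξ ∂ν| ≤ 2 * M * M := by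
    intro z
    have h1 := norm_integral_le_integral_norm (μ := ν)
      (fun ξ => (f (τ z ξ) - f ξ) * f ξ)
    have h2 : ∫ ξ, ‖(f (τ z ξ) - f ξ) * f ξ‖ ∂ν ≤ ∫ _ξ, 2 * M * M ∂ν :=
      integral_mono (hint3 z).norm (integrable_const _)
        (fun ξ => habs _ _ (hM _) (hM _))
    rw [integral_const, probReal_univ, smul_eq_mul, one_mul] at h2
    exact le_trans h1 h2
  have hsum1 : Summable (fun z => c z * ∫ ξ, (f (τ z ξ) - f ξ) * f ξ ∂ν) := by
    refine Summable.of_norm_bounded (g := fun z => c z * (2 * M * M))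
      (hcsum.mul_right _) fun z => ?_
    rw [norm_mul, Real.norm_eq_abs, Real.norm_eq_abs, abs_of_nonneg (hc z)]
    exact mul_le_mul_of_nonneg_left (hIbd z) (hc z)
  calc ∑' z : ℤ, c z * ∫ ξ, (f (τ z ξ) - f ξ) * f ξ ∂ν
      ≤ ∑' z : ℤ, c z * K :=
        Summable.tsum_le_tsum (fun z => mul_le_mul_of_nonneg_left (hz z) (hc z))
          hsum1 (hcsum.mul_right K)
    _ = (∑' z : ℤ, c z) * K := tsum_mul_right
    _ = (∑' z : ℤ, c z) / (2 * (1 - α)) * ∫ ξ, (f ξ) ^ 2 ∂ν := by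
        rw [hKdef]; ring
end
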